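/- arXiv:1201.0083 — 3 statements merged into one kernel-verified Lean document; each statement's English description precedes it below -/
import Mathlib

section
/- Let $(X_i)_{1\le i\le n}$ be integrable and adapted to $(\mathcal F_i)_{0\le i\le n}$, and let $W_i$ be the backward-recursive thresholds $W_n = -\infty$, $W_i = E[X_{i+1} \vee W_{i+1} \mid \mathcal F_i]$. Then for any stopping time $S$, the stopping time $T(S) := \min\{S < i \le n : X_i > W_i\}$ satisfies $E[X_{T(S)} \mid \mathcal F_S] = W_S \ge E[X_T \mid \mathcal F_S]$ almost surely for every stopping time $T$ with $T > S$ on $\{S < n\}$ and $T = S$ on $\{S = n\}$. -/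
open MeasureTheory Filter Set

section OSAux

variable {Ω : Type*} {m0 : MeasurableSpace Ω}

/-- Measurable version of the backward-recursive thresholds. -/
noncomputable def osWm (μ : Measure Ω) (n : ℕ) (ℱ : Filtration ℕ m0) (X : ℕ → Ω → ℝ)
    (i : ℕ) : Ω → ℝ :=
  if h : i + 1 < n then
    μ[fun ω => max (X (i + 1) ω) (osWm μ n ℱ X (i + 1) ω) | ℱ i]
  else μ[X n | ℱ i]
  termination_by n - i
  decreasing_by omega

lemma osWm_sm (μ : Measure Ω) (n : ℕ) (ℱ : Filtration ℕ m0) (X : ℕ → Ω → ℝ) (i : ℕ) :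
    StronglyMeasurable[ℱ i] (osWm μ n ℱ X i) := by
  rw [osWm]; split <;> exact stronglyMeasurable_condExp

lemma osWm_meas (μ : Measure Ω) (n : ℕ) (ℱ : Filtration ℕ m0) (X : ℕ → Ω → ℝ) (i : ℕ) :
    Measurable (osWm μ n ℱ X i) :=
  ((osWm_sm μ n ℱ X i).mono (ℱ.le i)).measurable

lemma osWm_int (μ : Measure Ω) (n : ℕ) (ℱ : Filtration ℕ m0) (X : ℕ → Ω → ℝ) (i : ℕ) :
    Integrable (osWm μ n ℱ X i) μ := by
  rw [osWm]; split <;> exact integrable_condExp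

end OSAux

section OSAux2

variable {Ω : Type*} {m : MeasurableSpace Ω} {m0 : MeasurableSpace Ω}

/-- Restricted conditional expectation congruence. -/
lemma osCondexp_restrict_congr {μ : Measure Ω} (hm : m ≤ m0)
    [SigmaFinite (μ.trim hm)] {s : Set Ω} (hs : MeasurableSet[m] s) {f g : Ω → ℝ}
    (hf : Integrable f μ) (hg : Integrable g μ) (hfg : f =ᵐ[μ.restrict s] g) :
    μ[f|m] =ᵐ[μ.restrict s] μ[g|m] := by
  have hs0 : MeasurableSet[m0] s := hm s hs
  have h1 : s.indicator f =ᵐ[μ] s.indicator g := by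
    refine ae_of_ae_restrict_of_ae_restrict_compl s ?_ ?_
    · exact (indicator_ae_eq_restrict hs0).trans (hfg.trans (indicator_ae_eq_restrict hs0).symm)
    · filter_upwards [ae_restrict_mem hs0.compl] with ω hω
      simp [Set.indicator_of_notMem hω]
  calc μ[f|m] =ᵐ[μ.restrict s] s.indicator (μ[f|m]) := (indicator_ae_eq_restrict hs0).symm
    _ =ᵐ[μ.restrict s] μ[s.indicator f|m] := ae_restrict_of_ae (condExp_indicator hf hs).symm
    _ =ᵐ[μ.restrict s] μ[s.indicator g|m] := ae_restrict_of_ae (condExp_congr_ae h1)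
    _ =ᵐ[μ.restrict s] s.indicator (μ[g|m]) := ae_restrict_of_ae (condExp_indicator hg hs)
    _ =ᵐ[μ.restrict s] μ[g|m] := indicator_ae_eq_restrict hs0

/-- Restricted conditional expectation monotonicity. -/
lemma osCondexp_restrict_mono {μ : Measure Ω} (hm : m ≤ m0)
    [SigmaFinite (μ.trim hm)] {s : Set Ω} (hs : MeasurableSet[m] s) {f g : Ω → ℝ}
    (hf : Integrable f μ) (hg : Integrable g μ) (hfg : f ≤ᵐ[μ.restrict s] g) :
    μ[f|m] ≤ᵐ[μ.restrict s] μ[g|m] := by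
  have hs0 : MeasurableSet[m0] s := hm s hs
  have h1 : s.indicator f ≤ᵐ[μ] s.indicator g := by
    refine ae_of_ae_restrict_of_ae_restrict_compl s ?_ ?_
    · filter_upwards [ae_restrict_mem hs0, hfg] with ω hω hle
      rw [Set.indicator_of_mem hω, Set.indicator_of_mem hω]; exact hle
    · filter_upwards [ae_restrict_mem hs0.compl] with ω hω
      simp [Set.indicator_of_notMem hω]
  have h2 := condExp_mono (μ := μ) (m := m) (hf.indicator hs0) (hg.indicator hs0) h1
  filter_upwards [ae_restrict_of_ae h2, ae_restrict_of_ae (condExp_indicator hf hs),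
    ae_restrict_of_ae (condExp_indicator hg hs),
    ae_restrict_mem hs0] with ω h hε1 hε2 hω
  rw [← Set.indicator_of_mem hω (μ[f|m]), ← Set.indicator_of_mem hω (μ[g|m]), ← hε1, ← hε2]
  exact h

end OSAux2

section OSAux3

variable {Ω : Type*} {m0 : MeasurableSpace Ω}

lemma osIntegrable_stopped (μ : Measure Ω) (n : ℕ) {X : ℕ → Ω → ℝ}
    (hXint : ∀ i, Integrable (X i) μ) {T : Ω → ℕ} (hT : Measurable T) (hTn : ∀ ω, T ω ≤ n) :
    Integrable (fun ω => X (T ω) ω) μ := by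
  have h : (fun ω => X (T ω) ω)
      = fun ω => ∑ i ∈ Finset.range (n + 1), (T ⁻¹' {i}).indicator (X i) ω := by
    funext ω
    rw [Finset.sum_eq_single_of_mem (T ω) (Finset.mem_range.2 (Nat.lt_succ_of_le (hTn ω)))]
    · exact (Set.indicator_of_mem (Set.mem_preimage.2 (Set.mem_singleton _)) _).symm
    · intro b _ hb
      refine Set.indicator_of_notMem ?_ _
      intro hmem
      rw [Set.mem_preimage, Set.mem_singleton_iff] at hmem
      exact hb hmem.symm
  rw [h]
  exact integrable_finset_sum _ fun i _ => (hXint i).indicator (hT (measurableSet_singleton i))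

lemma osMeasurableSet_eq {ℱ : Filtration ℕ m0} {T : Ω → ℕ}
    (hT : IsStoppingTime ℱ (fun ω => (T ω : WithTop ℕ))) (i : ℕ) :
    MeasurableSet[ℱ i] {ω | T ω = i} := by
  have h := hT.measurableSet_eq_of_countable i
  convert h using 2 with ω
  simp

lemma osIsStoppingTime_max {ℱ : Filtration ℕ m0} {T : Ω → ℕ}
    (hT : IsStoppingTime ℱ (fun ω => (T ω : WithTop ℕ))) (c : ℕ) :
    IsStoppingTime ℱ (fun ω => ((max (T ω) c : ℕ) : WithTop ℕ)) := by
  have h := hT.max (isStoppingTime_const ℱ c)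
  have e : (fun ω => ((max (T ω) c : ℕ) : WithTop ℕ))
      = fun ω => max (T ω : WithTop ℕ) (c : WithTop ℕ) :=
    funext fun ω => WithTop.coe_max (T ω) c
  rw [e]
  exact h

lemma osMeasurable_of_isStoppingTime {ℱ : Filtration ℕ m0} {T : Ω → ℕ}
    (hT : IsStoppingTime ℱ (fun ω => (T ω : WithTop ℕ))) : Measurable T := by
  refine measurable_to_countable' fun i => ?_
  exact ℱ.le i _ (osMeasurableSet_eq hT i)

end OSAux3
section OSAux4

variable {Ω : Type*} {m0 : MeasurableSpace Ω}

/-- The candidate set for the threshold rule after time `k`. -/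
def osSet (n k : ℕ) (Wf X : ℕ → Ω → ℝ) (ω : Ω) : Set ℕ :=
  {i | k < i ∧ i ≤ n ∧ (i = n ∨ Wf i ω < X i ω)}

/-- The threshold stopping time started strictly after time `k`. -/
noncomputable def osT (n k : ℕ) (Wf X : ℕ → Ω → ℝ) (ω : Ω) : ℕ :=
  sInf (osSet n k Wf X ω)

variable {n k : ℕ} {Wf X : ℕ → Ω → ℝ} {ω : Ω}

lemma osSet_nonempty (hk : k < n) : (osSet n k Wf X ω).Nonempty :=
  ⟨n, hk, le_rfl, Or.inl rfl⟩

lemma osT_mem (hk : k < n) : osT n k Wf X ω ∈ osSet n k Wf X ω :=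
  Nat.sInf_mem (osSet_nonempty hk)

lemma osT_lt (hk : k < n) : k < osT n k Wf X ω := (osT_mem hk).1

lemma osT_le (hk : k < n) : osT n k Wf X ω ≤ n := (osT_mem hk).2.1

lemma osT_eq_iff (hk : k < n) {i : ℕ} :
    osT n k Wf X ω = i ↔ i ∈ osSet n k Wf X ω ∧ ∀ j < i, j ∉ osSet n k Wf X ω := by
  constructor
  · rintro rfl
    exact ⟨osT_mem hk, fun j hj => Nat.notMem_of_lt_sInf hj⟩
  · rintro ⟨h1, h2⟩
    refine le_antisymm (Nat.sInf_le h1) (not_lt.1 fun hlt => h2 _ hlt (osT_mem hk))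

lemma osMeasurable_osT (hW : ∀ i, Measurable (Wf i)) (hX : ∀ i, Measurable (X i)) (hk : k < n) :
    Measurable (osT n k Wf X) := by
  have hP : ∀ j : ℕ, MeasurableSet {ω : Ω | j ∈ osSet n k Wf X ω} := by
    intro j
    have h : {ω : Ω | j ∈ osSet n k Wf X ω}
        = {ω : Ω | k < j ∧ j ≤ n ∧ j = n} ∪ ({ω : Ω | k < j ∧ j ≤ n} ∩ {ω | Wf j ω < X j ω}) := by
      ext ω
      simp only [osSet, Set.mem_setOf_eq, Set.mem_union, Set.mem_inter_iff]
      tauto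
    rw [h]
    exact (MeasurableSet.const _).union
      ((MeasurableSet.const _).inter (measurableSet_lt (hW j) (hX j)))
  refine measurable_to_countable' fun i => ?_
  have h : osT n k Wf X ⁻¹' {i}
      = {ω : Ω | i ∈ osSet n k Wf X ω} ∩ ⋂ j ∈ Set.Iio i, {ω : Ω | j ∈ osSet n k Wf X ω}ᶜ := by
    ext ω
    simp only [Set.mem_preimage, Set.mem_singleton_iff, Set.mem_inter_iff, Set.mem_iInter,
      Set.mem_compl_iff, Set.mem_Iio, Set.mem_setOf_eq, osT_eq_iff hk]
  rw [h]
  exact (hP i).inter (MeasurableSet.biInter (Set.to_countable _) fun j _ => (hP j).compl)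

lemma osSet_congr {W' : ℕ → Ω → ℝ} (h : ∀ i < n, Wf i ω = W' i ω) :
    osSet n k Wf X ω = osSet n k W' X ω := by
  ext i
  simp only [osSet, Set.mem_setOf_eq]
  refine and_congr_right fun _ => and_congr_right fun h2 => ?_
  by_cases hi : i = n
  · simp [hi]
  · rw [h i (lt_of_le_of_ne h2 hi)]

end OSAux4
section OSAux5

open MeasureTheory Filter Set

variable {Ω : Type*} {m0 : MeasurableSpace Ω}

/-- Upper bound: any stopping time strictly after `k` has conditional value at most `osWm k`. -/
lemma osUB (μ : Measure Ω) [IsFiniteMeasure μ] (n : ℕ) (ℱ : Filtration ℕ m0)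
    (X : ℕ → Ω → ℝ) (hXint : ∀ i, Integrable (X i) μ)
    (hXadapt : ∀ i, StronglyMeasurable[ℱ i] (X i)) :
    ∀ j k, k + 1 + j = n → ∀ T : Ω → ℕ, IsStoppingTime ℱ (fun ω => (T ω : WithTop ℕ)) →
      (∀ ω, k < T ω ∧ T ω ≤ n) →
      μ[fun ω => X (T ω) ω | ℱ k] ≤ᵐ[μ] osWm μ n ℱ X k := by
  intro j
  induction j with
  | zero =>
    intro k hkn T hT hTb
    have hTn : ∀ ω, T ω = n := fun ω => by have h1 := (hTb ω).1; have h2 := (hTb ω).2; omega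
    have h : (fun ω => X (T ω) ω) = X n := funext fun ω => by rw [hTn ω]
    rw [h, osWm, dif_neg (by omega)]
  | succ j ih =>
    intro k hkn T hT hTb
    have hk1n : k + 1 + 1 ≤ n := by omega
    have hT' : IsStoppingTime ℱ (fun ω => ((max (T ω) (k + 2) : ℕ) : WithTop ℕ)) :=
      osIsStoppingTime_max hT (k + 2)
    have hT'b : ∀ ω, k + 1 < max (T ω) (k + 2) ∧ max (T ω) (k + 2) ≤ n := fun ω =>
      ⟨lt_of_lt_of_le (by omega) (le_max_right _ _), max_le (hTb ω).2 (by omega)⟩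
    have hmeasT : Measurable T := osMeasurable_of_isStoppingTime hT
    have hIntT : Integrable (fun ω => X (T ω) ω) μ :=
      osIntegrable_stopped μ n hXint hmeasT fun ω => (hTb ω).2
    have hIntT' : Integrable (fun ω => X (max (T ω) (k + 2)) ω) μ :=
      osIntegrable_stopped μ n hXint (hmeasT.max measurable_const) fun ω => (hT'b ω).2
    have hYint : Integrable (fun ω => max (X (k + 1) ω) (osWm μ n ℱ X (k + 1) ω)) μ :=
      (hXint (k + 1)).sup (osWm_int μ n ℱ X (k + 1))
    have hA : MeasurableSet[ℱ (k + 1)] {ω | T ω = k + 1} :=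
      osMeasurableSet_eq hT (k + 1)
    have hA0 : MeasurableSet {ω | T ω = k + 1} := ℱ.le _ _ hA
    have hstep : μ[fun ω => X (T ω) ω | ℱ (k + 1)]
        ≤ᵐ[μ] fun ω => max (X (k + 1) ω) (osWm μ n ℱ X (k + 1) ω) := by
      refine ae_of_ae_restrict_of_ae_restrict_compl {ω | T ω = k + 1} ?_ ?_
      · have h1 : μ[fun ω => X (T ω) ω | ℱ (k + 1)]
            =ᵐ[μ.restrict {ω | T ω = k + 1}] μ[X (k + 1) | ℱ (k + 1)] := by
          refine osCondexp_restrict_congr (ℱ.le (k + 1)) hA hIntT (hXint (k + 1)) ?_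
          filter_upwards [ae_restrict_mem hA0] with ω hω
          have : T ω = k + 1 := hω
          rw [this]
        have h2 : μ[X (k + 1) | ℱ (k + 1)] = X (k + 1) :=
          condExp_of_stronglyMeasurable (ℱ.le _) (hXadapt _) (hXint _)
        filter_upwards [h1] with ω hω
        rw [hω, h2]
        exact le_max_left _ _
      · have h1 : μ[fun ω => X (T ω) ω | ℱ (k + 1)]
            =ᵐ[μ.restrict {ω | T ω = k + 1}ᶜ] μ[fun ω => X (max (T ω) (k + 2)) ω | ℱ (k + 1)] := by
          refine osCondexp_restrict_congr (ℱ.le (k + 1)) hA.compl hIntT hIntT' ?_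
          filter_upwards [ae_restrict_mem hA0.compl] with ω hω
          have h2 : T ω ≠ k + 1 := hω
          have h3 : max (T ω) (k + 2) = T ω := max_eq_left (by have := (hTb ω).1; omega)
          rw [h3]
        have h3 := ih (k + 1) (by omega) _ hT' hT'b
        filter_upwards [h1, ae_restrict_of_ae h3] with ω hω1 hω2
        rw [hω1]
        exact le_trans hω2 (le_max_right _ _)
    calc μ[fun ω => X (T ω) ω | ℱ k]
        =ᵐ[μ] μ[μ[fun ω => X (T ω) ω | ℱ (k + 1)] | ℱ k] :=
          (condExp_condExp_of_le (ℱ.mono (Nat.le_succ k)) (ℱ.le (k + 1))).symm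
      _ ≤ᵐ[μ] μ[fun ω => max (X (k + 1) ω) (osWm μ n ℱ X (k + 1) ω) | ℱ k] :=
          condExp_mono integrable_condExp hYint hstep
      _ =ᵐ[μ] osWm μ n ℱ X k := by
          conv_rhs => rw [osWm, dif_pos (show k + 1 < n by omega)]

/-- The threshold rule attains `osWm k`. -/
lemma osATT (μ : Measure Ω) [IsFiniteMeasure μ] (n : ℕ) (ℱ : Filtration ℕ m0)
    (X : ℕ → Ω → ℝ) (hXint : ∀ i, Integrable (X i) μ)
    (hXadapt : ∀ i, StronglyMeasurable[ℱ i] (X i)) :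
    ∀ j k, k + 1 + j = n →
      μ[fun ω => X (osT n k (osWm μ n ℱ X) X ω) ω | ℱ k] =ᵐ[μ] osWm μ n ℱ X k := by
  intro j
  induction j with
  | zero =>
    intro k hkn
    have hTn : ∀ ω : Ω, osT n k (osWm μ n ℱ X) X ω = n := fun ω => by
      have h1 := osT_lt (Wf := osWm μ n ℱ X) (X := X) (ω := ω) (show k < n by omega)
      have h2 := osT_le (Wf := osWm μ n ℱ X) (X := X) (ω := ω) (show k < n by omega)
      omega
    have h : (fun ω => X (osT n k (osWm μ n ℱ X) X ω) ω) = X n := funext fun ω => by rw [hTn ω]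
    rw [h, osWm, dif_neg (by omega)]
  | succ j ih =>
    intro k hkn
    have hk1n : k + 1 + 1 ≤ n := by omega
    have hkn' : k < n := by omega
    have hk1n' : k + 1 < n := by omega
    have hWmeas : ∀ i, Measurable (osWm μ n ℱ X i) := osWm_meas μ n ℱ X
    have hXmeas : ∀ i, Measurable (X i) := fun i => ((hXadapt i).mono (ℱ.le i)).measurable
    have hmeasT : Measurable (osT n k (osWm μ n ℱ X) X) := osMeasurable_osT hWmeas hXmeas hkn'
    have hmeasT1 : Measurable (osT n (k + 1) (osWm μ n ℱ X) X) :=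
      osMeasurable_osT hWmeas hXmeas hk1n'
    have hIntT : Integrable (fun ω => X (osT n k (osWm μ n ℱ X) X ω) ω) μ :=
      osIntegrable_stopped μ n hXint hmeasT fun ω => osT_le hkn'
    have hIntT1 : Integrable (fun ω => X (osT n (k + 1) (osWm μ n ℱ X) X ω) ω) μ :=
      osIntegrable_stopped μ n hXint hmeasT1 fun ω => osT_le hk1n'
    have hYint : Integrable (fun ω => max (X (k + 1) ω) (osWm μ n ℱ X (k + 1) ω)) μ :=
      (hXint (k + 1)).sup (osWm_int μ n ℱ X (k + 1))
    set A : Set Ω := {ω | osWm μ n ℱ X (k + 1) ω < X (k + 1) ω} with hAdef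
    have hA : MeasurableSet[ℱ (k + 1)] A :=
      measurableSet_lt ((osWm_sm μ n ℱ X (k + 1)).measurable) ((hXadapt (k + 1)).measurable)
    have hA0 : MeasurableSet A := ℱ.le _ _ hA
    -- on A, the threshold time is k+1
    have hTA : ∀ ω ∈ A, osT n k (osWm μ n ℱ X) X ω = k + 1 := by
      intro ω hω
      refine le_antisymm (Nat.sInf_le ?_) ?_
      · exact ⟨Nat.lt_succ_self k, le_of_lt hk1n', Or.inr hω⟩
      · exact osT_lt hkn'
    -- off A, the threshold time coincides with the one started after k+1
    have hTAc : ∀ ω ∉ A, osT n k (osWm μ n ℱ X) X ω = osT n (k + 1) (osWm μ n ℱ X) X ω := by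
      intro ω hω
      have hset : osSet n k (osWm μ n ℱ X) X ω = osSet n (k + 1) (osWm μ n ℱ X) X ω := by
        ext i
        simp only [osSet, Set.mem_setOf_eq]
        constructor
        · rintro ⟨h1, h2, h3⟩
          refine ⟨?_, h2, h3⟩
          rcases Nat.lt_or_ge (k + 1) i with h | h
          · exact h
          · exfalso
            have hik : i = k + 1 := by omega
            subst hik
            rcases h3 with h3 | h3
            · omega
            · exact hω h3
        · rintro ⟨h1, h2, h3⟩
          exact ⟨by omega, h2, h3⟩
      rw [osT, osT, hset]
    have hstep : μ[fun ω => X (osT n k (osWm μ n ℱ X) X ω) ω | ℱ (k + 1)]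
        =ᵐ[μ] fun ω => max (X (k + 1) ω) (osWm μ n ℱ X (k + 1) ω) := by
      refine ae_of_ae_restrict_of_ae_restrict_compl A ?_ ?_
      · have h1 : μ[fun ω => X (osT n k (osWm μ n ℱ X) X ω) ω | ℱ (k + 1)]
            =ᵐ[μ.restrict A] μ[X (k + 1) | ℱ (k + 1)] := by
          refine osCondexp_restrict_congr (ℱ.le (k + 1)) hA hIntT (hXint (k + 1)) ?_
          filter_upwards [ae_restrict_mem hA0] with ω hω
          rw [hTA ω hω]
        have h2 : μ[X (k + 1) | ℱ (k + 1)] = X (k + 1) :=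
          condExp_of_stronglyMeasurable (ℱ.le _) (hXadapt _) (hXint _)
        filter_upwards [h1, ae_restrict_mem hA0] with ω hω1 hω2
        rw [hω1, h2]
        exact (max_eq_left (le_of_lt hω2)).symm
      · have h1 : μ[fun ω => X (osT n k (osWm μ n ℱ X) X ω) ω | ℱ (k + 1)]
            =ᵐ[μ.restrict Aᶜ]
              μ[fun ω => X (osT n (k + 1) (osWm μ n ℱ X) X ω) ω | ℱ (k + 1)] := by
          refine osCondexp_restrict_congr (ℱ.le (k + 1)) hA.compl hIntT hIntT1 ?_
          filter_upwards [ae_restrict_mem hA0.compl] with ω hω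
          rw [hTAc ω hω]
        have h3 := ih (k + 1) (by omega)
        filter_upwards [h1, ae_restrict_of_ae h3, ae_restrict_mem hA0.compl] with ω hω1 hω2 hω3
        have hω3' : ¬ osWm μ n ℱ X (k + 1) ω < X (k + 1) ω := hω3
        rw [hω1, hω2]
        exact (max_eq_right (not_lt.1 hω3')).symm
    calc μ[fun ω => X (osT n k (osWm μ n ℱ X) X ω) ω | ℱ k]
        =ᵐ[μ] μ[μ[fun ω => X (osT n k (osWm μ n ℱ X) X ω) ω | ℱ (k + 1)] | ℱ k] :=
          (condExp_condExp_of_le (ℱ.mono (Nat.le_succ k)) (ℱ.le (k + 1))).symm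
      _ =ᵐ[μ] μ[fun ω => max (X (k + 1) ω) (osWm μ n ℱ X (k + 1) ω) | ℱ k] :=
          condExp_congr_ae hstep
      _ =ᵐ[μ] osWm μ n ℱ X k := by
          conv_rhs => rw [osWm, dif_pos (show k + 1 < n by omega)]

end OSAux5
section OSAux6

open MeasureTheory Filter Set

variable {Ω : Type*} {m0 : MeasurableSpace Ω}

lemma osAe_of_restrict (μ : Measure Ω) (n : ℕ) {S : Ω → ℕ} (hSmeas : Measurable S)
    (hSn : ∀ ω, S ω ≤ n) {p : Ω → Prop}
    (h : ∀ k ≤ n, ∀ᵐ ω ∂μ.restrict {ω | S ω = k}, p ω) : ∀ᵐ ω ∂μ, p ω := by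
  rw [ae_iff]
  have hsub : {ω | ¬ p ω} ⊆ ⋃ k ∈ Set.Iic n, {ω | ¬ p ω} ∩ {ω | S ω = k} :=
    fun ω hω => Set.mem_biUnion (hSn ω) ⟨hω, rfl⟩
  refine measure_mono_null hsub ?_
  rw [measure_biUnion_null_iff (Set.to_countable _)]
  intro k hk
  have h2 := h k hk
  rw [ae_iff] at h2
  rw [Measure.restrict_apply' (show MeasurableSet {ω | S ω = k} from hSmeas (measurableSet_singleton k))] at h2
  exact h2

end OSAux6

/-- Recursive solution of the one-stopping problem with random starting time
(Proposition 2.1(b)): for a stopping time `S ≤ n`, the threshold stopping time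
`T(S) = min{S < i ≤ n : X_i > W_i}` (with `W_n = -∞`, encoded by allowing `i = n`
unconditionally, and `T(S) = n`, `W_S := X_n` on `{S = n}`) attains `W_S` and
dominates every stopping time `T` with `T > S` on `{S < n}` and `T = S` on `{S = n}`. -/
theorem stmt1 {Ω : Type*} {m0 : MeasurableSpace Ω} (μ : Measure Ω) [IsProbabilityMeasure μ]
    (n : ℕ) (hn : 1 ≤ n) (ℱ : Filtration ℕ m0)
    (X : ℕ → Ω → ℝ) (hXint : ∀ i, Integrable (X i) μ)
    (hXadapt : ∀ i, StronglyMeasurable[ℱ i] (X i))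
    (W : ℕ → Ω → ℝ)
    (hWn : W (n - 1) =ᵐ[μ] μ[X n | ℱ (n - 1)])
    (hWrec : ∀ i, i + 1 < n →
      W i =ᵐ[μ] μ[fun ω => max (X (i + 1) ω) (W (i + 1) ω) | ℱ i])
    (S : Ω → ℕ) (hS : IsStoppingTime ℱ (fun ω => (S ω : WithTop ℕ))) (hSn : ∀ ω, S ω ≤ n)
    (TS : Ω → ℕ)
    (hTS : ∀ ω, TS ω = if S ω = n then n
      else sInf {i | S ω < i ∧ i ≤ n ∧ (i = n ∨ W i ω < X i ω)}) :
    μ[fun ω => X (TS ω) ω | hS.measurableSpace]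
      =ᵐ[μ] (fun ω => if S ω = n then X n ω else W (S ω) ω) ∧
    ∀ T : Ω → ℕ, IsStoppingTime ℱ (fun ω => (T ω : WithTop ℕ)) →
      (∀ ω, (S ω < n → S ω < T ω) ∧ (S ω = n → T ω = S ω) ∧ T ω ≤ n) →
      μ[fun ω => X (T ω) ω | hS.measurableSpace]
        ≤ᵐ[μ] fun ω => if S ω = n then X n ω else W (S ω) ω := by
  classical
  have hSmeas : Measurable S := osMeasurable_of_isStoppingTime hS
  have hWmeas : ∀ i, Measurable (osWm μ n ℱ X i) := osWm_meas μ n ℱ X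
  have hXmeas : ∀ i, Measurable (X i) := fun i => ((hXadapt i).mono (ℱ.le i)).measurable
  haveI hSF : SigmaFinite (μ.trim hS.measurableSpace_le) :=
    by infer_instance
  -- W agrees a.e. with the measurable version osWm below n
  have hWwm : ∀ j k, k + 1 + j = n → W k =ᵐ[μ] osWm μ n ℱ X k := by
    intro j
    induction j with
    | zero =>
      intro k hkn
      have hk : n - 1 = k := by omega
      have h1 : osWm μ n ℱ X k = μ[X n | ℱ k] := by rw [osWm, dif_neg (by omega)]
      rw [h1, ← hk]
      exact hWn
    | succ j ih =>
      intro k hkn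
      have hk1 : k + 1 < n := by omega
      have h2 := ih (k + 1) (by omega)
      refine (hWrec k hk1).trans ?_
      have h3 : (fun ω => max (X (k + 1) ω) (W (k + 1) ω))
          =ᵐ[μ] fun ω => max (X (k + 1) ω) (osWm μ n ℱ X (k + 1) ω) := by
        filter_upwards [h2] with ω hω
        rw [hω]
      refine (condExp_congr_ae h3).trans ?_
      conv_rhs => rw [osWm, dif_pos hk1]
  have hWwm' : ∀ k, k < n → W k =ᵐ[μ] osWm μ n ℱ X k := fun k hk =>
    hWwm (n - (k + 1)) k (by omega)
  have hG : ∀ᵐ ω ∂μ, ∀ i, i < n → W i ω = osWm μ n ℱ X i ω := by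
    rw [ae_all_iff]
    intro i
    by_cases hi : i < n
    · filter_upwards [hWwm' i hi] with ω h _
      exact h
    · exact ae_of_all _ fun ω h => absurd h hi
  -- measurable version of TS
  have hTS'meas : Measurable (fun ω => if S ω = n then n else osT n (S ω) (osWm μ n ℱ X) X ω) := by
    refine measurable_to_countable' fun i => ?_
    have h : (fun ω => if S ω = n then n else osT n (S ω) (osWm μ n ℱ X) X ω) ⁻¹' {i}
        = ⋃ k ∈ Set.Iic n, ({ω | S ω = k}
            ∩ {ω | (if k = n then n else osT n k (osWm μ n ℱ X) X ω) = i}) := by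
      ext ω
      simp only [Set.mem_preimage, Set.mem_singleton_iff, Set.mem_iUnion, Set.mem_inter_iff,
        Set.mem_setOf_eq, Set.mem_Iic]
      constructor
      · intro h
        exact ⟨S ω, hSn ω, rfl, h⟩
      · rintro ⟨k, -, rfl, h⟩
        exact h
    rw [h]
    refine MeasurableSet.biUnion (Set.to_countable _) fun k hk => ?_
    refine ((show MeasurableSet {ω | S ω = k} from hSmeas (measurableSet_singleton k))).inter ?_
    by_cases hkn : k = n
    · simp only [if_pos hkn]
      exact MeasurableSet.const _
    · simp only [if_neg hkn]
      exact osMeasurable_osT hWmeas hXmeas (lt_of_le_of_ne hk hkn) (measurableSet_singleton i)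
  have hTS'n : ∀ ω, (if S ω = n then n else osT n (S ω) (osWm μ n ℱ X) X ω) ≤ n := by
    intro ω
    by_cases h : S ω = n
    · simp [h]
    · simp only [if_neg h]
      exact osT_le (lt_of_le_of_ne (hSn ω) h)
  have hIntTS' : Integrable
      (fun ω => X (if S ω = n then n else osT n (S ω) (osWm μ n ℱ X) X ω) ω) μ :=
    osIntegrable_stopped μ n hXint hTS'meas hTS'n
  have hXTSae : (fun ω => X (TS ω) ω)
      =ᵐ[μ] fun ω => X (if S ω = n then n else osT n (S ω) (osWm μ n ℱ X) X ω) ω := by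
    filter_upwards [hG] with ω hω
    rw [hTS ω]
    by_cases h : S ω = n
    · simp [h]
    · simp only [if_neg h]
      have ht : sInf {i | S ω < i ∧ i ≤ n ∧ (i = n ∨ W i ω < X i ω)}
          = osT n (S ω) (osWm μ n ℱ X) X ω :=
        congrArg sInf (osSet_congr fun i hi => hω i hi)
      rw [ht]
  have hIntTS : Integrable (fun ω => X (TS ω) ω) μ := hIntTS'.congr hXTSae.symm
  constructor
  · -- attainment
    refine osAe_of_restrict μ n hSmeas hSn fun k hk => ?_
    have h1 : μ[fun ω => X (TS ω) ω | hS.measurableSpace]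
        =ᵐ[μ.restrict {ω | S ω = k}] μ[fun ω => X (TS ω) ω | ℱ k] := by
      have h := condExp_stopping_time_ae_eq_restrict_eq_of_countable
        (μ := μ) (f := fun ω => X (TS ω) ω) hS k
      convert h using 3
      ext ω
      simp
    rcases eq_or_lt_of_le hk with hkn | hkn
    · subst hkn
      have hmeasSk : MeasurableSet {ω | S ω = k} := hSmeas (measurableSet_singleton k)
      have h2 : μ[fun ω => X (TS ω) ω | ℱ k] =ᵐ[μ.restrict {ω | S ω = k}] μ[X k | ℱ k] := by
        refine osCondexp_restrict_congr (ℱ.le k) (osMeasurableSet_eq hS k) hIntTS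
          (hXint k) ?_
        filter_upwards [ae_restrict_mem hmeasSk] with ω hω
        have hω' : S ω = k := hω
        rw [hTS ω, if_pos hω']
      have h3 : μ[X k | ℱ k] = X k :=
        condExp_of_stronglyMeasurable (ℱ.le k) (hXadapt k) (hXint k)
      filter_upwards [h1, h2, ae_restrict_mem hmeasSk] with ω e1 e2 hω
      have hω' : S ω = k := hω
      rw [e1, e2, h3, if_pos hω']
    · have hmeasSk : MeasurableSet {ω | S ω = k} := hSmeas (measurableSet_singleton k)
      have h2 : μ[fun ω => X (TS ω) ω | ℱ k] =ᵐ[μ.restrict {ω | S ω = k}]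
          μ[fun ω => X (osT n k (osWm μ n ℱ X) X ω) ω | ℱ k] := by
        refine osCondexp_restrict_congr (ℱ.le k) (osMeasurableSet_eq hS k) hIntTS
          (osIntegrable_stopped μ n hXint (osMeasurable_osT hWmeas hXmeas hkn)
            fun ω => osT_le hkn) ?_
        filter_upwards [ae_restrict_mem hmeasSk, ae_restrict_of_ae hG] with ω hω hGω
        have hω' : S ω = k := hω
        have ht : sInf {i | S ω < i ∧ i ≤ n ∧ (i = n ∨ W i ω < X i ω)}
            = osT n k (osWm μ n ℱ X) X ω := by
          rw [hω']
          exact congrArg sInf (osSet_congr fun i hi => hGω i hi)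
        rw [hTS ω, if_neg (by omega : ¬ S ω = n), ht]
      have h3 := osATT μ n ℱ X hXint hXadapt (n - (k + 1)) k (by omega)
      filter_upwards [h1, h2, ae_restrict_of_ae h3, ae_restrict_of_ae (hWwm' k hkn),
        ae_restrict_mem hmeasSk] with ω e1 e2 e3 e4 hω
      have hω' : S ω = k := hω
      rw [e1, e2, e3, if_neg (by omega : ¬ S ω = n), hω']
      exact e4.symm
  · -- optimality
    intro T hT hTb
    have hTmeas : Measurable T := osMeasurable_of_isStoppingTime hT
    have hIntT : Integrable (fun ω => X (T ω) ω) μ :=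
      osIntegrable_stopped μ n hXint hTmeas fun ω => (hTb ω).2.2
    refine osAe_of_restrict μ n hSmeas hSn fun k hk => ?_
    have h1 : μ[fun ω => X (T ω) ω | hS.measurableSpace]
        =ᵐ[μ.restrict {ω | S ω = k}] μ[fun ω => X (T ω) ω | ℱ k] := by
      have h := condExp_stopping_time_ae_eq_restrict_eq_of_countable
        (μ := μ) (f := fun ω => X (T ω) ω) hS k
      convert h using 3
      ext ω
      simp
    rcases eq_or_lt_of_le hk with hkn | hkn
    · subst hkn
      have hmeasSk : MeasurableSet {ω | S ω = k} := hSmeas (measurableSet_singleton k)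
      have h2 : μ[fun ω => X (T ω) ω | ℱ k] =ᵐ[μ.restrict {ω | S ω = k}] μ[X k | ℱ k] := by
        refine osCondexp_restrict_congr (ℱ.le k) (osMeasurableSet_eq hS k) hIntT
          (hXint k) ?_
        filter_upwards [ae_restrict_mem hmeasSk] with ω hω
        have hω' : S ω = k := hω
        rw [(hTb ω).2.1 hω', hω']
      have h3 : μ[X k | ℱ k] = X k :=
        condExp_of_stronglyMeasurable (ℱ.le k) (hXadapt k) (hXint k)
      filter_upwards [h1, h2, ae_restrict_mem hmeasSk] with ω e1 e2 hω
      have hω' : S ω = k := hω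
      rw [e1, e2, h3, if_pos hω']
    · have hmeasSk : MeasurableSet {ω | S ω = k} := hSmeas (measurableSet_singleton k)
      have hT' : IsStoppingTime ℱ (fun ω => ((max (T ω) (k + 1) : ℕ) : WithTop ℕ)) :=
        osIsStoppingTime_max hT (k + 1)
      have hT'b : ∀ ω, k < max (T ω) (k + 1) ∧ max (T ω) (k + 1) ≤ n := fun ω =>
        ⟨lt_of_lt_of_le (Nat.lt_succ_self k) (le_max_right _ _), max_le (hTb ω).2.2 hkn⟩
      have hIntT' : Integrable (fun ω => X (max (T ω) (k + 1)) ω) μ :=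
        osIntegrable_stopped μ n hXint (hTmeas.max measurable_const) fun ω => (hT'b ω).2
      have h2 : μ[fun ω => X (T ω) ω | ℱ k] =ᵐ[μ.restrict {ω | S ω = k}]
          μ[fun ω => X (max (T ω) (k + 1)) ω | ℱ k] := by
        refine osCondexp_restrict_congr (ℱ.le k) (osMeasurableSet_eq hS k) hIntT
          hIntT' ?_
        filter_upwards [ae_restrict_mem hmeasSk] with ω hω
        have hω' : S ω = k := hω
        have hTgt : k < T ω := by
          have := (hTb ω).1 (by omega : S ω < n)
          omega
        rw [max_eq_left (by omega : k + 1 ≤ T ω)]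
      have h3 := osUB μ n ℱ X hXint hXadapt (n - (k + 1)) k (by omega) _ hT' hT'b
      filter_upwards [h1, h2, ae_restrict_of_ae h3, ae_restrict_of_ae (hWwm' k hkn),
        ae_restrict_mem hmeasSk] with ω e1 e2 e3 e4 hω
      have hω' : S ω = k := hω
      rw [e1, e2, if_neg (by omega : ¬ S ω = n), hω']
      exact le_trans e3 (le_of_eq e4.symm)
end

section
/- In Case 3, the function $u^m(t,x) := \phi^m(x - v(t)) + v(t)$, with $\phi^m$ the inverse of $\Phi^m$, satisfies $\partial_t u^m(t,x) = -\int_{u^m(t,x)}^\infty G(t, \xi^{m-1}(t,y))\,dy$ on $[0,1)$ with $u^m(1,x) = x$, where $G(t,y) = H(y-v(t))|v'(t)|$ and $\xi^{m-1}(t,\cdot)$ is the inverse of $u^{m-1}(t,\cdot)$ ($u^0(t,x) := x$). In particular $u^m(t,-\infty) = r_m + v(t)$. -/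
open MeasureTheory Set Filter

private lemma indicator_shift (h : ℝ → ℝ) (A c : ℝ) :
    (Ioi A).indicator (fun y => h (y - c)) = fun y => (Ioi (A - c)).indicator h (y - c) := by
  funext y
  simp only [Set.indicator_apply, mem_Ioi, sub_lt_sub_iff_right]

private lemma setIntegral_Ioi_comp_sub (h : ℝ → ℝ) (A c : ℝ) :
    (∫ y in Ioi A, h (y - c)) = ∫ y in Ioi (A - c), h y := by
  rw [← integral_indicator measurableSet_Ioi, ← integral_indicator measurableSet_Ioi,
    indicator_shift, integral_sub_right_eq_self (fun y => (Ioi (A - c)).indicator h y) c]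

private lemma integrableOn_Ioi_comp_sub {h : ℝ → ℝ} {B c : ℝ}
    (hh : IntegrableOn h (Ioi (B - c))) :
    IntegrableOn (fun y => h (y - c)) (Ioi B) := by
  rw [← integrable_indicator_iff measurableSet_Ioi, indicator_shift]
  exact ((integrable_indicator_iff measurableSet_Ioi).2 hh).comp_sub_right c

private lemma tailIntegral (f : ℝ → ℝ) (b : ℝ)
    (hfi : ∀ x ∈ Ioi b, IntegrableOn f (Ioi x))
    (hfc : ContinuousOn f (Ioi b))
    (hf0 : ∀ y ∈ Ioi b, 0 ≤ f y) :
    (∀ x₁ ∈ Ioi b, ∀ x₂, x₁ ≤ x₂ →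
      (∫ y in Ioi x₁, f y) = (∫ y in Ioc x₁ x₂, f y) + ∫ y in Ioi x₂, f y) ∧
    (∀ x ∈ Ioi b, HasDerivAt (fun s => ∫ y in Ioi s, f y) (-f x) x) ∧
    (∀ x ∈ Ioi b, 0 ≤ ∫ y in Ioi x, f y) ∧
    (∀ x₁ ∈ Ioi b, ∀ x₂, x₁ ≤ x₂ → (∫ y in Ioi x₂, f y) ≤ ∫ y in Ioi x₁, f y) ∧
    Tendsto (fun s => ∫ y in Ioi s, f y) atTop (nhds 0) := by
  have hsplit : ∀ x₁ ∈ Ioi b, ∀ x₂, x₁ ≤ x₂ →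
      (∫ y in Ioi x₁, f y) = (∫ y in Ioc x₁ x₂, f y) + ∫ y in Ioi x₂, f y := by
    intro x₁ hx₁ x₂ h12
    rw [← Ioc_union_Ioi_eq_Ioi h12]
    refine setIntegral_union ?_ measurableSet_Ioi
      ((hfi x₁ hx₁).mono_set Ioc_subset_Ioi_self)
      ((hfi x₁ hx₁).mono_set (Ioi_subset_Ioi h12))
    exact disjoint_left.2 fun y hy hy' => absurd hy.2 (not_le.2 hy')
  have keyId : ∀ x₀ ∈ Ioi b, ∀ x ∈ Ioi b,
      (∫ y in Ioi x, f y) = (∫ y in Ioi x₀, f y) - ∫ u in x₀..x, f u := by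
    intro x₀ hx₀ x hx
    rcases le_total x₀ x with h | h
    · rw [intervalIntegral.integral_of_le h]
      have := hsplit x₀ hx₀ x h
      linarith
    · rw [intervalIntegral.integral_of_ge h]
      have := hsplit x hx x₀ h
      linarith
  have hderiv : ∀ x ∈ Ioi b, HasDerivAt (fun s => ∫ y in Ioi s, f y) (-f x) x := by
    intro x hx
    have hii : IntervalIntegrable f volume x x := by
      rw [intervalIntegrable_iff]
      simp
    have hFTC : HasDerivAt (fun s => ∫ u in x..s, f u) (f x) x :=
      intervalIntegral.integral_hasDerivAt_right hii
        (hfc.stronglyMeasurableAtFilter isOpen_Ioi x hx)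
        (hfc.continuousAt (isOpen_Ioi.mem_nhds hx))
    have h2 : HasDerivAt (fun s => (∫ y in Ioi x, f y) - ∫ u in x..s, f u) (-f x) x :=
      hFTC.const_sub _
    refine h2.congr_of_eventuallyEq ?_
    filter_upwards [isOpen_Ioi.mem_nhds hx] with s hs
    exact keyId x hx s hs
  have hnn : ∀ x ∈ Ioi b, 0 ≤ ∫ y in Ioi x, f y := by
    intro x hx
    exact setIntegral_nonneg measurableSet_Ioi fun y hy => hf0 y (mem_Ioi.2 (lt_trans (mem_Ioi.1 hx) (mem_Ioi.1 hy)))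
  have hmono : ∀ x₁ ∈ Ioi b, ∀ x₂, x₁ ≤ x₂ →
      (∫ y in Ioi x₂, f y) ≤ ∫ y in Ioi x₁, f y := by
    intro x₁ hx₁ x₂ h12
    have := hsplit x₁ hx₁ x₂ h12
    have h0 : 0 ≤ ∫ y in Ioc x₁ x₂, f y :=
      setIntegral_nonneg measurableSet_Ioc fun y hy => hf0 y (hx₁.trans hy.1)
    linarith
  refine ⟨hsplit, hderiv, hnn, hmono, ?_⟩
  have hb' : b + 1 ∈ Ioi b := by simp
  have h1 : Tendsto (fun s => ∫ u in (b+1)..s, f u) atTop (nhds (∫ y in Ioi (b+1), f y)) :=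
    intervalIntegral_tendsto_integral_Ioi (b+1) (hfi _ hb') tendsto_id
  have h2 : Tendsto (fun s => (∫ y in Ioi (b+1), f y) - ∫ u in (b+1)..s, f u) atTop
      (nhds ((∫ y in Ioi (b+1), f y) - ∫ y in Ioi (b+1), f y)) :=
    tendsto_const_nhds.sub h1
  rw [sub_self] at h2
  refine h2.congr' ?_
  filter_upwards [eventually_gt_atTop b] with s hs
  exact (keyId _ hb' s hs).symm

private lemma inv_facts {F g : ℝ → ℝ} {b : ℝ} (hsm : StrictMonoOn F (Ioi b))
    (h1 : ∀ z, b < g z) (h2 : ∀ z, F (g z) = z) :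
    (∀ w ∈ Ioi b, g (F w) = w) ∧ (∀ z, ContinuousAt g z) := by
  have left : ∀ w ∈ Ioi b, g (F w) = w := fun w hw => hsm.injOn (h1 _) hw (h2 (F w))
  refine ⟨left, fun z => ?_⟩
  rw [ContinuousAt]
  refine tendsto_order.2 ⟨?_, ?_⟩
  · intro c hc
    rcases le_or_gt c b with h | h
    · exact Eventually.of_forall fun u => lt_of_le_of_lt h (h1 u)
    · have hz : F c < z := by
        conv_rhs => rw [← h2 z]
        exact hsm h (h1 z) hc
      filter_upwards [eventually_gt_nhds hz] with u hu
      by_contra hcon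
      push_neg at hcon
      have : u ≤ F c := by
        conv_lhs => rw [← h2 u]
        exact hsm.monotoneOn (h1 u) h hcon
      linarith
  · intro c hc
    have hbc : b < c := (h1 z).trans hc
    have hz : z < F c := by
      conv_lhs => rw [← h2 z]
      exact hsm (h1 z) hbc hc
    filter_upwards [eventually_lt_nhds hz] with u hu
    by_contra hcon
    push_neg at hcon
    have : F c ≤ u := by
      conv_rhs => rw [← h2 u]
      exact hsm.monotoneOn hbc (h1 u) hcon
    linarith

private lemma step (H : ℝ → ℝ) (hmono : Antitone H) (hcont : Continuous H)
    (hnonneg : ∀ x, 0 ≤ H x) (hint : ∀ x : ℝ, IntegrableOn H (Ioi x))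
    (hiter : ∀ z : ℝ, IntegrableOn (fun y => ∫ x in Ioi y, H x) (Ioi z))
    (Ψ S Φj : ℝ → ℝ) (a b : ℝ) (hab : a < b)
    (hΨmono : MonotoneOn Ψ (Ioi a))
    (hΨdiff : ∀ y₁ ∈ Ioi a, ∀ y₂, y₁ ≤ y₂ → y₂ - Ψ y₂ ≤ y₁ - Ψ y₁)
    (hΨcont : ContinuousOn Ψ (Ioi a))
    (hS : ∀ x ∈ Ioi a, S x = 1 - ∫ y in Ioi x, H (Ψ y))
    (hSb : S b = 0)
    (hΦj : ∀ x ∈ Ioi b, Φj x = x - ∫ y in Ioi x, (1 / S y - 1)) :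
    StrictMonoOn Φj (Ioi b) ∧
    (∀ y ∈ Ioi b, Φj y ≤ y) ∧
    (∀ y₁ ∈ Ioi b, ∀ y₂, y₁ ≤ y₂ → y₂ - Φj y₂ ≤ y₁ - Φj y₁) ∧
    ContinuousOn Φj (Ioi b) ∧
    (∀ x ∈ Ioi b, 0 < S x ∧ HasDerivAt Φj (1 / S x) x) ∧
    Tendsto (fun y => y - Φj y) atTop (nhds 0) := by
  classical
  set d : ℝ → ℝ := fun y => H (Ψ y) with hd
  have hdc : ContinuousOn d (Ioi a) := hcont.comp_continuousOn hΨcont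
  have hd0 : ∀ y ∈ Ioi a, 0 ≤ d y := fun y _ => hnonneg _
  have hdanti : ∀ y₁ ∈ Ioi a, ∀ y₂ ∈ Ioi a, y₁ ≤ y₂ → d y₂ ≤ d y₁ :=
    fun y₁ h₁ y₂ h₂ h12 => hmono (hΨmono h₁ h₂ h12)
  -- integrability of d on tails
  have hdint : ∀ x ∈ Ioi a, IntegrableOn d (Ioi x) := by
    intro x hx
    have hdom : IntegrableOn (fun y => H (y - (x - Ψ x))) (Ioi x) :=
      integrableOn_Ioi_comp_sub (hint (x - (x - Ψ x)))
    refine Integrable.mono' hdom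
      ((hdc.mono (Ioi_subset_Ioi hx.le)).aestronglyMeasurable measurableSet_Ioi) ?_
    refine (ae_restrict_iff' measurableSet_Ioi).2 (Eventually.of_forall fun y hy => ?_)
    rw [Real.norm_eq_abs, abs_of_nonneg (hnonneg _)]
    refine hmono ?_
    have := hΨdiff x hx y (le_of_lt hy)
    linarith
  obtain ⟨Dsplit, Dderiv, Dnonneg, Dmono, Dtend⟩ := tailIntegral d a hdint hdc hd0
  set D : ℝ → ℝ := fun x => ∫ y in Ioi x, d y with hD
  have hbmem : b ∈ Ioi a := hab
  have hDb : D b = 1 := by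
    have := hS b hbmem
    rw [hSb] at this
    linarith
  have hSval : ∀ x ∈ Ioi a, S x = 1 - D x := hS
  -- positivity and upper bound of S on Ioi b
  have hSpos : ∀ x ∈ Ioi b, 0 < S x ∧ S x ≤ 1 := by
    intro x hx
    have hxa : x ∈ Ioi a := hab.trans hx
    have hle : S x ≤ 1 := by
      have := Dnonneg x hxa
      rw [hSval x hxa]; linarith
    refine ⟨?_, hle⟩
    set w := (b + x) / 2 with hw
    have hbw : b < w := by rw [hw]; simp only [mem_Ioi] at hx; linarith
    have hwx : w < x := by rw [hw]; simp only [mem_Ioi] at hx; linarith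
    have hwa : w ∈ Ioi a := hab.trans hbw
    by_cases hdw : d w = 0
    · have hzero : ∀ y ∈ Ioi x, d y = 0 := by
        intro y hy
        have h1 : d y ≤ d w := hdanti w hwa y (mem_Ioi.2 (lt_trans (mem_Ioi.1 hxa) (mem_Ioi.1 hy))) (hwx.le.trans (le_of_lt hy))
        have h2 := hd0 y (mem_Ioi.2 (lt_trans (mem_Ioi.1 hxa) (mem_Ioi.1 hy)))
        linarith [hdw ▸ h1]
      have : D x = 0 := by
        show (∫ y in Ioi x, d y) = 0
        rw [setIntegral_congr_fun measurableSet_Ioi hzero]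
        simp
      rw [hSval x hxa, this]; norm_num
    · have hdwpos : 0 < d w := lt_of_le_of_ne (hd0 w hwa) (Ne.symm hdw)
      have hsx : S x = ∫ y in Ioc b x, d y := by
        have h1 : D b = (∫ y in Ioc b x, d y) + D x := Dsplit b hbmem x (le_of_lt hx)
        rw [hDb] at h1
        rw [hSval x hxa]
        linarith
      have hIbx : IntegrableOn d (Ioc b x) := (hdint b hbmem).mono_set Ioc_subset_Ioi_self
      have h2 : (∫ y in Ioc b w, d y) ≤ ∫ y in Ioc b x, d y := by
        refine setIntegral_mono_set hIbx ?_ ?_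
        · exact (ae_restrict_iff' measurableSet_Ioc).2
            (Eventually.of_forall fun y hy => hd0 y (hab.trans hy.1))
        · exact HasSubset.Subset.eventuallyLE (Ioc_subset_Ioc_right hwx.le)
      have h3 : (w - b) * d w ≤ ∫ y in Ioc b w, d y := by
        have hc : (∫ _ in Ioc b w, d w) ≤ ∫ y in Ioc b w, d y := by
          refine setIntegral_mono_on (integrableOn_const measure_Ioc_lt_top.ne)
            ((hdint b hbmem).mono_set Ioc_subset_Ioi_self) measurableSet_Ioc ?_
          intro y hy
          exact hdanti y (hab.trans hy.1) w hwa hy.2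
        rw [setIntegral_const, Real.volume_real_Ioc, max_eq_left (by linarith)] at hc
        simpa using hc
      rw [hsx]
      have : 0 < (w - b) * d w := mul_pos (by linarith) hdwpos
      linarith
  have hScont : ContinuousOn S (Ioi a) := by
    have hDcont : ContinuousOn D (Ioi a) :=
      fun x hx => (Dderiv x hx).continuousAt.continuousWithinAt
    exact (continuousOn_const.sub hDcont).congr hSval
  set f : ℝ → ℝ := fun y => 1 / S y - 1 with hf
  have hfc : ContinuousOn f (Ioi b) := by
    refine ContinuousOn.sub ?_ continuousOn_const
    exact continuousOn_const.div (hScont.mono (Ioi_subset_Ioi hab.le))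
      (fun x hx => (hSpos x hx).1.ne')
  have hf0 : ∀ y ∈ Ioi b, 0 ≤ f y := by
    intro y hy
    have h := hSpos y hy
    have : 1 ≤ 1 / S y := by
      rw [le_div_iff₀ h.1]; linarith
    simpa [hf] using this
  have hfi : ∀ x ∈ Ioi b, IntegrableOn f (Ioi x) := by
    intro x hx
    have hhalf : ∀ᶠ s in atTop, D s < 1/2 :=
      Dtend.eventually_lt_const (by norm_num)
    obtain ⟨x₁, hx₁⟩ := (hhalf.and (eventually_ge_atTop x)).exists
    have hxx₁ : x ≤ x₁ := hx₁.2
    have hx₁b : x₁ ∈ Ioi b := lt_of_lt_of_le hx hxx₁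
    have hx₁a : x₁ ∈ Ioi a := hab.trans hx₁b
    have hD12 : ∀ y, x₁ ≤ y → D y ≤ 1/2 := by
      intro y hy
      exact le_trans (Dmono x₁ hx₁a y hy) hx₁.1.le
    -- integrable on Ioc x x₁
    have hI1 : IntegrableOn f (Ioc x x₁) := by
      have hsub : Icc x x₁ ⊆ Ioi b := fun y hy => lt_of_lt_of_le hx hy.1
      exact ((hfc.mono hsub).integrableOn_Icc).mono_set Ioc_subset_Icc_self
    -- integrable on Ioi x₁
    have hI2 : IntegrableOn f (Ioi x₁) := by
      set C := b - Ψ b with hC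
      have hT : IntegrableOn (fun y => 2 * ∫ z in Ioi (y - C), H z) (Ioi x₁) := by
        have := integrableOn_Ioi_comp_sub (h := fun w => ∫ z in Ioi w, H z)
          (B := x₁) (c := C) (hiter (x₁ - C))
        exact this.const_mul 2
      refine Integrable.mono' hT
        ((hfc.mono (Ioi_subset_Ioi hx₁b.le)).aestronglyMeasurable measurableSet_Ioi) ?_
      refine (ae_restrict_iff' measurableSet_Ioi).2 (Eventually.of_forall fun y hy => ?_)
      have hyb : y ∈ Ioi b := mem_Ioi.2 (lt_trans (mem_Ioi.1 hx₁b) (mem_Ioi.1 hy))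
      have hya : y ∈ Ioi a := hab.trans hyb
      have hSy := hSpos y hyb
      have hDy : D y ≤ 1/2 := hD12 y (le_of_lt hy)
      have hSy2 : 1/2 ≤ S y := by rw [hSval y hya]; linarith
      -- D y ≤ ∫ z in Ioi (y - C), H z
      have hDbound : D y ≤ ∫ z in Ioi (y - C), H z := by
        have hmon : D y ≤ ∫ z in Ioi y, H (z - C) := by
          refine setIntegral_mono_on (hdint y hya)
            (integrableOn_Ioi_comp_sub (hint (y - C))) measurableSet_Ioi ?_
          intro z hz
          refine hmono ?_
          have := hΨdiff b hbmem z (le_of_lt (hyb.trans hz))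
          rw [hC]; linarith
        calc D y ≤ ∫ z in Ioi y, H (z - C) := hmon
          _ = ∫ z in Ioi (y - C), H z := setIntegral_Ioi_comp_sub H y C
      rw [Real.norm_eq_abs, abs_of_nonneg (hf0 y hyb)]
      have hfval : f y = D y / S y := by
        have hSne : S y ≠ 0 := hSy.1.ne'
        have h1 : S y = 1 - D y := hSval y hya
        rw [hf]
        field_simp
        linarith
      rw [hfval]
      have h2D : D y / S y ≤ 2 * D y := by
        rw [div_le_iff₀ hSy.1]
        nlinarith [Dnonneg y hya]
      calc D y / S y ≤ 2 * D y := h2D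
        _ ≤ 2 * ∫ z in Ioi (y - C), H z := by linarith
    have := hI1.union hI2
    rwa [Ioc_union_Ioi_eq_Ioi hxx₁] at this
  obtain ⟨esplit, ederiv, enonneg, emono, etend⟩ := tailIntegral f b hfi hfc hf0
  set e : ℝ → ℝ := fun x => ∫ y in Ioi x, f y with he
  have hΦval : ∀ x ∈ Ioi b, Φj x = x - e x := hΦj
  refine ⟨?_, ?_, ?_, ?_, ?_, ?_⟩
  · intro x₁ h₁ x₂ h₂ hlt
    rw [hΦval x₁ h₁, hΦval x₂ h₂]
    have := emono x₁ h₁ x₂ hlt.le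
    linarith
  · intro y hy
    rw [hΦval y hy]
    have := enonneg y hy
    linarith
  · intro y₁ h₁ y₂ h12
    have h₂ : y₂ ∈ Ioi b := lt_of_lt_of_le h₁ h12
    rw [hΦval y₁ h₁, hΦval y₂ h₂]
    have := emono y₁ h₁ y₂ h12
    linarith
  · intro x hx
    have hder : HasDerivAt Φj (1 / S x) x := by
      have h1 : HasDerivAt (fun y => y - e y) (1 - -f x) x :=
        (hasDerivAt_id x).sub (ederiv x hx)
      have h2 : (1 : ℝ) - -f x = 1 / S x := by
        rw [hf]; ring
      rw [h2] at h1
      refine h1.congr_of_eventuallyEq ?_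
      filter_upwards [isOpen_Ioi.mem_nhds hx] with s hs
      exact hΦval s hs
    exact hder.continuousAt.continuousWithinAt
  · intro x hx
    refine ⟨(hSpos x hx).1, ?_⟩
    have h1 : HasDerivAt (fun y => y - e y) (1 - -f x) x :=
      (hasDerivAt_id x).sub (ederiv x hx)
    have h2 : (1 : ℝ) - -f x = 1 / S x := by
      rw [hf]; ring
    rw [h2] at h1
    refine h1.congr_of_eventuallyEq ?_
    filter_upwards [isOpen_Ioi.mem_nhds hx] with s hs
    exact hΦval s hs
  · refine etend.congr' ?_
    filter_upwards [eventually_gt_atTop b] with s hs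
    rw [hΦval s hs]
    ring

/-- Case 3 explicit optimal `m`-stopping curves (Section 4): with additive intensity
`G(t,y) = H(y - v(t))·|v'(t)|`, `v` nonincreasing `C¹`, finite on `[0,1)`, `v(1) = -∞`,
the functions `uᵐ(t,x) = φᵐ(x - v(t)) + v(t)` (with `φᵐ = (Φᵐ)⁻¹`) solve
`∂_t uᵐ(t,x) = -∫_{uᵐ(t,x)}^∞ G(t, ξ^{m-1}(t,y)) dy` with `uᵐ(1,x) = x`, and
`uᵐ(t,-∞) = r_m + v(t)`. -/
theorem stmt11 (H : ℝ → ℝ)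
    (hmono : Antitone H) (hcont : Continuous H) (hnonneg : ∀ x, 0 ≤ H x)
    (hpos : 0 < ∫⁻ x, ENNReal.ofReal (H x))
    (hint : ∀ x : ℝ, IntegrableOn H (Ioi x))
    (hiter : ∀ z : ℝ, IntegrableOn (fun y => ∫ x in Ioi y, H x) (Ioi z))
    (R : ℕ → ℝ → ℝ) (r : ℕ → ℝ) (Φ : ℕ → ℝ → ℝ) (φ : ℕ → ℝ → ℝ)
    (hΦ0 : ∀ x, Φ 0 x = x)
    (hR : ∀ j, 1 ≤ j → ∀ x, (2 ≤ j → r (j - 1) < x) →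
      R j x = 1 - ∫ y in Ioi x, H (Φ (j - 1) y))
    (hrzero : ∀ j, 1 ≤ j → (2 ≤ j → r (j - 1) < r j) ∧ R j (r j) = 0)
    (hΦdef : ∀ j, 1 ≤ j → ∀ x, r j < x →
      Φ j x = x - ∫ y in Ioi x, (1 / R j y - 1))
    (hφ : ∀ j, 1 ≤ j → ∀ z : ℝ, r j < φ j z ∧ Φ j (φ j z) = z)
    (m : ℕ) (hm : 1 ≤ m)
    (v : ℝ → ℝ) (hv : ContDiffOn ℝ 1 v (Ico 0 1)) (hvmono : AntitoneOn v (Ico 0 1))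
    (hv1 : Tendsto v (nhdsWithin 1 (Iio 1)) atBot)
    (G : ℝ → ℝ → ℝ)
    (hG : ∀ t ∈ Ico (0:ℝ) 1, ∀ y, G t y = H (y - v t) * |deriv v t|)
    (u : ℕ → ℝ → ℝ → ℝ)
    (hu0 : ∀ t x, u 0 t x = x)
    (hu : ∀ j, 1 ≤ j → j ≤ m → ∀ t ∈ Ico (0:ℝ) 1, ∀ x, u j t x = φ j (x - v t) + v t)
    (ξ : ℝ → ℝ → ℝ)
    (hξ : ∀ t ∈ Ico (0:ℝ) 1, ∀ z, ξ t (u (m - 1) t z) = z) :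
    (∀ x : ℝ, ∀ t ∈ Ioo (0:ℝ) 1,
      HasDerivAt (fun s => u m s x)
        (-(∫ y in Ioi (u m t x), G t (ξ t y))) t) ∧
    (∀ x : ℝ, Tendsto (fun t => u m t x) (nhdsWithin 1 (Iio 1)) (nhds x)) ∧
    (∀ t ∈ Ico (0:ℝ) 1,
      Tendsto (fun x => u m t x) atBot (nhds (r m + v t))) := by
  classical
  -- the tower of level facts
  have hA : ∀ k : ℕ, 1 ≤ k → k ≤ m →
      StrictMonoOn (Φ k) (Ioi (r k)) ∧
      (∀ y ∈ Ioi (r k), Φ k y ≤ y) ∧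
      (∀ y₁ ∈ Ioi (r k), ∀ y₂, y₁ ≤ y₂ → y₂ - Φ k y₂ ≤ y₁ - Φ k y₁) ∧
      ContinuousOn (Φ k) (Ioi (r k)) ∧
      (∀ x ∈ Ioi (r k), 0 < R k x ∧ HasDerivAt (Φ k) (1 / R k x) x) ∧
      Tendsto (fun y => y - Φ k y) atTop (nhds 0) := by
    intro k
    induction k with
    | zero => omega
    | succ n ih =>
      intro _ hle
      rcases Nat.eq_zero_or_pos n with rfl | hn
      · -- level 1, previous level is the identity
        have h0 : (1 : ℕ) - 1 = 0 := rfl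
        refine step H hmono hcont hnonneg hint hiter (Φ 0) (R 1) (Φ 1) (r 1 - 1) (r 1)
          (by linarith) ?_ ?_ ?_ ?_ ((hrzero 1 le_rfl).2) (hΦdef 1 le_rfl)
        · intro x _ y _ hxy; rw [hΦ0, hΦ0]; exact hxy
        · intro y₁ _ y₂ _; rw [hΦ0, hΦ0]; simp
        · exact continuous_id.continuousOn.congr (fun x _ => hΦ0 x)
        · intro x _
          have := hR 1 le_rfl x (by omega)
          simpa using this
      · -- level n+1, with n ≥ 1
        have prev := ih hn (le_trans (Nat.le_succ n) hle)
        have h2n : 2 ≤ n + 1 := by omega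
        have hab : r n < r (n + 1) := by
          have := (hrzero (n+1) (by omega)).1 h2n
          simpa using this
        refine step H hmono hcont hnonneg hint hiter (Φ n) (R (n+1)) (Φ (n+1)) (r n) (r (n+1))
          hab prev.1.monotoneOn prev.2.2.1 prev.2.2.2.1 ?_
          ((hrzero (n+1) (by omega)).2) (hΦdef (n+1) (by omega))
        · intro x hx
          have := hR (n+1) (by omega) x (fun _ => by simpa using hx)
          simpa using this
  obtain ⟨Lsm, Lle, Ldiff, _Lcont, Lderiv, Ltend⟩ := hA m hm le_rfl
  have hφm := hφ m hm
  obtain ⟨hleftm, hcontm⟩ := inv_facts Lsm (fun z => (hφm z).1) (fun z => (hφm z).2)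
  -- derivative of φ m
  have hφderiv : ∀ z : ℝ, HasDerivAt (φ m) (R m (φ m z)) z := by
    intro z
    have hp : r m < φ m z := (hφm z).1
    obtain ⟨hRpos, hΦder⟩ := Lderiv (φ m z) hp
    have h := HasDerivAt.of_local_left_inverse (hcontm z) hΦder
      (by positivity) (Eventually.of_forall fun y => (hφm y).2)
    rwa [one_div, inv_inv] at h
  -- the inverse ξ in terms of Φ (m-1)
  have hxi : ∀ t ∈ Ico (0:ℝ) 1, ∀ y, r m < y - v t →
      ξ t y = Φ (m - 1) (y - v t) + v t := by
    intro t ht y hy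
    rcases eq_or_lt_of_le hm with hm1 | hm2
    · have hm0 : m - 1 = 0 := by omega
      rw [hm0, hΦ0]
      have h := hξ t ht y
      rw [hm0, hu0] at h
      rw [h]; ring
    · have h1m : 1 ≤ m - 1 := by omega
      obtain ⟨Lsm', _, _, _, _, _⟩ := hA (m-1) h1m (by omega)
      have hrm : r (m-1) < r m := (hrzero m hm).1 (by omega)
      have hy' : r (m-1) < y - v t := lt_trans hrm hy
      obtain ⟨hleft', _⟩ := inv_facts Lsm' (fun z => (hφ (m-1) h1m z).1)
        (fun z => (hφ (m-1) h1m z).2)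
      have hval : u (m-1) t (Φ (m-1) (y - v t) + v t) = y := by
        rw [hu (m-1) h1m (by omega) t ht, add_sub_cancel_right, hleft' _ hy']
        ring
      have h := hξ t ht (Φ (m-1) (y - v t) + v t)
      rw [hval] at h
      exact h
  -- the integral identity
  have hIntId : ∀ t ∈ Ico (0:ℝ) 1, ∀ p, r m < p →
      (∫ y in Ioi (p + v t), G t (ξ t y)) = (1 - R m p) * |deriv v t| := by
    intro t ht p hp
    have e1 : ∀ y ∈ Ioi (p + v t), G t (ξ t y) = H (Φ (m-1) (y - v t)) * |deriv v t| := by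
      intro y hy
      have hyv : r m < y - v t := by
        have := mem_Ioi.1 hy; linarith
      rw [hxi t ht y hyv, hG t ht, add_sub_cancel_right]
    rw [setIntegral_congr_fun measurableSet_Ioi e1, integral_mul_const]
    congr 1
    have e2 : (∫ y in Ioi (p + v t), H (Φ (m-1) (y - v t))) = ∫ z in Ioi p, H (Φ (m-1) z) := by
      have := setIntegral_Ioi_comp_sub (fun z => H (Φ (m-1) z)) (p + v t) (v t)
      simpa [add_sub_cancel_right] using this
    rw [e2]
    have := hR m hm p (fun h2 => lt_trans ((hrzero m hm).1 h2) hp)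
    linarith
  refine ⟨?_, ?_, ?_⟩
  · -- Part 1 : the ODE
    intro x t ht
    have htI : t ∈ Ico (0:ℝ) 1 := ⟨ht.1.le, ht.2⟩
    have hmem : Ico (0:ℝ) 1 ∈ nhds t :=
      mem_of_superset (isOpen_Ioo.mem_nhds ht) Ioo_subset_Ico_self
    have hvd : HasDerivAt v (deriv v t) t :=
      ((hv.contDiffAt hmem).differentiableAt one_ne_zero).hasDerivAt
    -- deriv v t ≤ 0
    have hv'le : deriv v t ≤ 0 := by
      have hd : HasDerivWithinAt v (deriv v t) (Ioi t) t := hvd.hasDerivWithinAt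
      rw [hasDerivWithinAt_iff_tendsto_slope,
        diff_singleton_eq_self (fun h => lt_irrefl t (mem_Ioi.1 h))] at hd
      refine le_of_tendsto hd ?_
      filter_upwards [self_mem_nhdsWithin,
        mem_nhdsWithin_of_mem_nhds (isOpen_Iio.mem_nhds ht.2)] with s hs1 hs2
      rw [slope_def_field]
      have hsI : s ∈ Ico (0:ℝ) 1 := ⟨le_trans ht.1.le (le_of_lt hs1), hs2⟩
      have hvs : v s ≤ v t := hvmono htI hsI (le_of_lt hs1)
      have : (0:ℝ) < s - t := by simpa [sub_pos] using hs1
      exact div_nonpos_of_nonpos_of_nonneg (by linarith) this.le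
    set p := φ m (x - v t) with hpdef
    have hp : r m < p := (hφm (x - v t)).1
    have hinner : HasDerivAt (fun s => x - v s) (-deriv v t) t := hvd.const_sub x
    have houter : HasDerivAt (φ m) (R m p) (x - v t) := hφderiv (x - v t)
    have hcomp : HasDerivAt (fun s => φ m (x - v s)) (R m p * -deriv v t) t :=
      HasDerivAt.comp t houter hinner
    have hsum : HasDerivAt (fun s => φ m (x - v s) + v s)
        (R m p * -deriv v t + deriv v t) t := hcomp.add hvd
    have heq : (fun s => u m s x) =ᶠ[nhds t] (fun s => φ m (x - v s) + v s) := by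
      filter_upwards [hmem] with s hs
      exact hu m hm le_rfl s hs x
    have hval : R m p * -deriv v t + deriv v t = -(∫ y in Ioi (u m t x), G t (ξ t y)) := by
      have hU : u m t x = p + v t := hu m hm le_rfl t htI x
      rw [hU, hIntId t htI p hp, abs_of_nonpos hv'le]
      ring
    rw [← hval]
    exact hsum.congr_of_eventuallyEq heq
  · -- Part 2 : terminal condition
    intro x
    have hev : ∀ᶠ t in nhdsWithin 1 (Iio 1), t ∈ Ico (0:ℝ) 1 := by
      filter_upwards [self_mem_nhdsWithin,
        mem_nhdsWithin_of_mem_nhds (isOpen_Ioi.mem_nhds (by norm_num : (0:ℝ) < 1))] with t h1 h2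
      exact ⟨le_of_lt h2, h1⟩
    have hw : Tendsto (fun t => x - v t) (nhdsWithin 1 (Iio 1)) atTop := by
      have h1 : Tendsto (fun t => -v t) (nhdsWithin 1 (Iio 1)) atTop :=
        tendsto_neg_atBot_atTop.comp hv1
      have h2 := tendsto_atTop_add_const_left _ x h1
      refine h2.congr fun t => ?_
      ring
    have hup : Tendsto (fun t => (x - v t) - Φ m (x - v t)) (nhdsWithin 1 (Iio 1)) (nhds 0) :=
      Ltend.comp hw
    have hupper : Tendsto (fun t => x + ((x - v t) - Φ m (x - v t)))
        (nhdsWithin 1 (Iio 1)) (nhds x) := by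
      have hconst : Tendsto (fun _ : ℝ => x) (nhdsWithin 1 (Iio 1)) (nhds x) :=
        tendsto_const_nhds
      have := hconst.add hup
      simpa using this
    refine tendsto_of_tendsto_of_tendsto_of_le_of_le'
      (tendsto_const_nhds : Tendsto (fun _ : ℝ => x) _ (nhds x)) hupper ?_ ?_
    · filter_upwards [hev] with t ht
      rw [hu m hm le_rfl t ht x]
      have h1 : r m < φ m (x - v t) := (hφm (x - v t)).1
      have h2 : Φ m (φ m (x - v t)) = x - v t := (hφm (x - v t)).2
      have h3 : Φ m (φ m (x - v t)) ≤ φ m (x - v t) := Lle _ h1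
      rw [h2] at h3
      linarith
    · filter_upwards [hev, hw.eventually (eventually_gt_atTop (r m))] with t ht hwt
      rw [hu m hm le_rfl t ht x]
      have h1 : r m < φ m (x - v t) := (hφm (x - v t)).1
      have h2 : Φ m (φ m (x - v t)) = x - v t := (hφm (x - v t)).2
      have h3 : Φ m (φ m (x - v t)) ≤ φ m (x - v t) := Lle _ h1
      have h4 : x - v t ≤ φ m (x - v t) := by rw [h2] at h3; exact h3
      have h5 := Ldiff (x - v t) hwt (φ m (x - v t)) h4
      rw [h2] at h5
      linarith
  · -- Part 3 : behavior at -∞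
    intro t ht
    have hφtend : Tendsto (fun x => φ m (x - v t)) atBot (nhds (r m)) := by
      refine tendsto_order.2 ⟨?_, ?_⟩
      · intro c hc
        exact Eventually.of_forall fun x => lt_trans hc (hφm (x - v t)).1
      · intro c hc
        filter_upwards [eventually_lt_atBot (Φ m c + v t)] with x hx
        by_contra hcon
        push_neg at hcon
        have h1 : Φ m c ≤ Φ m (φ m (x - v t)) :=
          Lsm.monotoneOn hc (hφm (x - v t)).1 hcon
        rw [(hφm (x - v t)).2] at h1
        linarith
    have := hφtend.add (tendsto_const_nhds : Tendsto (fun _ : ℝ => v t) atBot (nhds (v t)))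
    refine this.congr fun x => ?_
    exact (hu m hm le_rfl t ht x).symm
end

section
/- Let $(Y_n)$, $Y$ be random variables and $(\mathcal G_n)$ a sequence of $\sigma$-algebras with $\mathcal G \subset \mathcal G_n$ for all $n$. Suppose that for every bounded continuous $f : \overline{\mathbb R} \to [0,1]$ one has $E[f(Y_n) \mid \mathcal G_n] \to E[f(Y)]$ in probability, and also $Y_n \to Y$ almost surely. Then $E[f(Y) \mid \mathcal G] = E[f(Y)]$ almost surely for every bounded continuous $f$; consequently $Y$ is independent of $\mathcal G$. -/
open MeasureTheory Filter Set
open scoped ENNReal NNReal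

/-- Asymptotic independence extraction (proof of Theorem 5.2(a)): if
`E[f(Y_n) | 𝒢_n] → E[f(Y)]` in probability for all continuous `f : ℝ → [0,1]`,
`Y_n → Y` a.s., and `𝒢 ⊆ 𝒢_n` for all `n`, then `E[f(Y) | 𝒢] = E[f(Y)]` a.s. for
every such `f`, and consequently `Y` is independent of `𝒢`. -/
theorem stmt18 {Ω : Type*} {m0 : MeasurableSpace Ω} (μ : Measure Ω) [IsProbabilityMeasure μ]
    (Y : ℕ → Ω → ℝ) (Ylim : Ω → ℝ) (hYm : ∀ n, Measurable (Y n)) (hYlim : Measurable Ylim)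
    (G : MeasurableSpace Ω) (Gn : ℕ → MeasurableSpace Ω)
    (hGG : ∀ n, G ≤ Gn n) (hGnm : ∀ n, Gn n ≤ m0) (hGm : G ≤ m0)
    (hconv : ∀ f : ℝ → ℝ, Continuous f → (∀ x, f x ∈ Icc (0:ℝ) 1) →
      TendstoInMeasure μ (fun n => μ[fun ω => f (Y n ω) | Gn n]) atTop
        (fun _ => ∫ ω, f (Ylim ω) ∂μ))
    (hae : ∀ᵐ ω ∂μ, Tendsto (fun n => Y n ω) atTop (nhds (Ylim ω))) :
    (∀ f : ℝ → ℝ, Continuous f → (∀ x, f x ∈ Icc (0:ℝ) 1) →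
      μ[fun ω => f (Ylim ω) | G] =ᵐ[μ] fun _ => ∫ ω, f (Ylim ω) ∂μ) ∧
    (∀ s : Set ℝ, MeasurableSet s → ∀ A : Set Ω, MeasurableSet[G] A →
      μ (Ylim ⁻¹' s ∩ A) = μ (Ylim ⁻¹' s) * μ A) := by
  letI : MeasurableSpace Ω := m0
  -- integrability of the compositions
  have hintlim : ∀ f : ℝ → ℝ, Continuous f → (∀ x, f x ∈ Icc (0:ℝ) 1) →
      Integrable (fun ω => f (Ylim ω)) μ := by
    intro f hf hf01
    refine (integrable_const (1:ℝ)).mono'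
      ((hf.measurable.comp hYlim).aestronglyMeasurable) (ae_of_all _ fun ω => ?_)
    rw [Real.norm_eq_abs, abs_le]
    constructor <;> linarith [(hf01 (Ylim ω)).1, (hf01 (Ylim ω)).2]
  have hintn : ∀ f : ℝ → ℝ, Continuous f → (∀ x, f x ∈ Icc (0:ℝ) 1) → ∀ n,
      Integrable (fun ω => f (Y n ω)) μ := by
    intro f hf hf01 n
    refine (integrable_const (1:ℝ)).mono'
      ((hf.measurable.comp (hYm n)).aestronglyMeasurable) (ae_of_all _ fun ω => ?_)
    rw [Real.norm_eq_abs, abs_le]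
    constructor <;> linarith [(hf01 (Y n ω)).1, (hf01 (Y n ω)).2]
  -- key set-integral identity
  have key : ∀ f : ℝ → ℝ, Continuous f → (∀ x, f x ∈ Icc (0:ℝ) 1) →
      ∀ A : Set Ω, MeasurableSet[G] A →
      ∫ ω in A, f (Ylim ω) ∂μ = (∫ ω, f (Ylim ω) ∂μ) * (μ A).toReal := by
    intro f hf hf01 A hA
    set c : ℝ := ∫ ω, f (Ylim ω) ∂μ with hc
    set Z : ℕ → Ω → ℝ := fun n => μ[fun ω => f (Y n ω) | Gn n] with hZ
    have hZbd : ∀ n, ∀ᵐ ω ∂μ, ‖Z n ω‖ ≤ 1 := by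
      intro n
      have h0 : 0 ≤ᵐ[μ] Z n :=
        condExp_nonneg (ae_of_all _ fun ω => (hf01 (Y n ω)).1)
      have h1 : Z n ≤ᵐ[μ] μ[(fun _ => (1:ℝ)) | Gn n] :=
        condExp_mono (hintn f hf hf01 n) (integrable_const 1)
          (ae_of_all _ fun ω => (hf01 (Y n ω)).2)
      rw [condExp_const (hGnm n)] at h1
      filter_upwards [h0, h1] with ω h0 h1
      simp only [Pi.zero_apply] at h0
      rw [Real.norm_eq_abs, abs_le]
      exact ⟨by linarith, h1⟩
    obtain ⟨ns, hns_mono, hns_ae⟩ := (hconv f hf hf01).exists_seq_tendsto_ae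
    -- Step A : convergence of ∫_A f(Y n)
    have hstepA : Tendsto (fun n => ∫ ω in A, f (Y n ω) ∂μ) atTop
        (nhds (∫ ω in A, f (Ylim ω) ∂μ)) := by
      refine tendsto_integral_of_dominated_convergence (fun _ => (1:ℝ))
        (fun n => ((hf.measurable.comp (hYm n)).aestronglyMeasurable).restrict)
        (integrable_const 1) (fun n => ae_restrict_of_ae (ae_of_all _ fun ω => ?_)) ?_
      · show ‖f (Y n ω)‖ ≤ 1
        rw [Real.norm_eq_abs, abs_le]
        constructor <;> linarith [(hf01 (Y n ω)).1, (hf01 (Y n ω)).2]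
      · filter_upwards [ae_restrict_of_ae hae] with ω hω
        exact (hf.tendsto (Ylim ω)).comp hω
    -- Step B : ∫_A f(Y n) = ∫_A Z n
    have hstepB : ∀ n, ∫ ω in A, f (Y n ω) ∂μ = ∫ ω in A, Z n ω ∂μ :=
      fun n => (setIntegral_condExp (hGnm n) (hintn f hf hf01 n) (hGG n A hA)).symm
    -- Step C : convergence of ∫_A Z (ns k)
    have hstepC : Tendsto (fun k => ∫ ω in A, Z (ns k) ω ∂μ) atTop
        (nhds (c * (μ A).toReal)) := by
      have h := tendsto_integral_of_dominated_convergence (μ := μ.restrict A)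
        (F := fun k => Z (ns k)) (f := fun _ => c) (fun _ => (1:ℝ))
        (fun k => ((stronglyMeasurable_condExp.mono (hGnm (ns k))).aestronglyMeasurable).restrict)
        (integrable_const 1) (fun k => ae_restrict_of_ae (hZbd (ns k)))
        (by
          filter_upwards [ae_restrict_of_ae hns_ae] with ω hω
          exact hω)
      rwa [setIntegral_const, smul_eq_mul, mul_comm] at h
    -- combine
    have h1 : Tendsto (fun k => ∫ ω in A, f (Y (ns k) ω) ∂μ) atTop
        (nhds (∫ ω in A, f (Ylim ω) ∂μ)) := hstepA.comp hns_mono.tendsto_atTop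
    have h2 : Tendsto (fun k => ∫ ω in A, f (Y (ns k) ω) ∂μ) atTop
        (nhds (c * (μ A).toReal)) := by
      simpa only [hstepB] using hstepC
    exact tendsto_nhds_unique h1 h2
  haveI : IsFiniteMeasure (μ.trim hGm) :=
    ⟨by rw [trim_measurableSet_eq hGm MeasurableSet.univ]; exact measure_lt_top _ _⟩
  constructor
  · intro f hf hf01
    refine (ae_eq_condExp_of_forall_setIntegral_eq hGm (hintlim f hf hf01)
      (fun s hs _ => integrableOn_const (measure_ne_top _ _))
      (fun s hs _ => ?_)
      ((@stronglyMeasurable_const Ω ℝ G _ _).aestronglyMeasurable)).symm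
    rw [key f hf hf01 s hs, setIntegral_const, smul_eq_mul, mul_comm]; rfl
  · intro s hs A hA
    haveI : IsFiniteMeasure ((μ.restrict A).map Ylim) :=
      ⟨by rw [Measure.map_apply hYlim MeasurableSet.univ]; exact measure_lt_top _ _⟩
    have hext : (μ.restrict A).map Ylim = (μ A) • μ.map Ylim := by
      apply ext_of_forall_lintegral_eq_of_IsFiniteMeasure
      intro f
      obtain ⟨C, hC⟩ := f.bounded
      have hC0 : (0:ℝ) ≤ C := le_trans dist_nonneg (hC 0 0)
      have hfb : ∀ x, ((f x : ℝ)) ≤ ((f 0 : ℝ)) + C := by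
        intro x
        have := hC x 0
        rw [NNReal.dist_eq] at this
        have h2 := abs_le.mp this
        linarith [h2.1, h2.2]
      set M : ℝ := ((f 0 : ℝ)) + C + 1 with hM
      have hMpos : (0:ℝ) < M := by
        have : (0:ℝ) ≤ (f 0 : ℝ) := (f 0).coe_nonneg
        rw [hM]; linarith
      set g : ℝ → ℝ := fun x => ((f x : ℝ)) / M with hg
      have hgcont : Continuous g :=
        (NNReal.continuous_coe.comp f.continuous).div_const M
      have hg01 : ∀ x, g x ∈ Icc (0:ℝ) 1 := by
        intro x
        constructor
        · exact div_nonneg (f x).coe_nonneg hMpos.le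
        · rw [div_le_one hMpos]
          have := hfb x
          linarith
      have hkey := key g hgcont hg01 A hA
      have hfx : ∀ x, ((f x : ℝ)) = M * g x := by
        intro x; simp only [hg]; field_simp
      -- real integral identity for f
      have hreal : ∫ ω in A, ((f (Ylim ω) : ℝ)) ∂μ
          = (∫ ω, ((f (Ylim ω) : ℝ)) ∂μ) * (μ A).toReal := by
        simp_rw [hfx]
        rw [integral_const_mul, integral_const_mul, hkey]; ring
      have hintf : Integrable (fun ω => ((f (Ylim ω) : ℝ))) μ := by
        have := (hintlim g hgcont hg01).const_mul M
        simpa only [← hfx] using this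
      have hintfA : Integrable (fun ω => ((f (Ylim ω) : ℝ))) (μ.restrict A) :=
        hintf.restrict
      have hnn : 0 ≤ᵐ[μ] fun ω => ((f (Ylim ω) : ℝ)) :=
        ae_of_all _ fun ω => (f (Ylim ω)).coe_nonneg
      have hmeas : Measurable fun x : ℝ => (f x : ℝ≥0∞) :=
        measurable_coe_nnreal_ennreal.comp f.continuous.measurable
      have hl1 : ∫⁻ x, (f x : ℝ≥0∞) ∂((μ.restrict A).map Ylim)
          = ENNReal.ofReal (∫ ω in A, ((f (Ylim ω) : ℝ)) ∂μ) := by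
        rw [lintegral_map hmeas hYlim]
        simp_rw [← ENNReal.ofReal_coe_nnreal]
        rw [← ofReal_integral_eq_lintegral_ofReal hintfA (ae_restrict_of_ae hnn)]
      have hl2 : ∫⁻ x, (f x : ℝ≥0∞) ∂((μ A) • μ.map Ylim)
          = ENNReal.ofReal ((∫ ω, ((f (Ylim ω) : ℝ)) ∂μ) * (μ A).toReal) := by
        rw [lintegral_smul_measure, lintegral_map hmeas hYlim]
        simp_rw [← ENNReal.ofReal_coe_nnreal]
        rw [← ofReal_integral_eq_lintegral_ofReal hintf hnn,
          ENNReal.ofReal_mul' ENNReal.toReal_nonneg, ENNReal.ofReal_toReal (measure_ne_top μ A),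
          mul_comm]; rfl
      rw [hl1, hl2, hreal]
    have h1 : (μ.restrict A).map Ylim s = μ (Ylim ⁻¹' s ∩ A) := by
      rw [Measure.map_apply hYlim hs, Measure.restrict_apply (hYlim hs)]
    have h2 : ((μ A) • μ.map Ylim) s = μ (Ylim ⁻¹' s) * μ A := by
      rw [Measure.smul_apply, Measure.map_apply hYlim hs, smul_eq_mul, mul_comm]
    rw [← h1, ← h2, hext]
end
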